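/- (Kunen–Prikry) If λ is a regular infinite cardinal and an ultrafilter U over a set I is λ⁺-decomposable, then U is λ-decomposable. -/

import Mathlib

open Cardinal

/-- An ultrafilter `U` over `I` is `μ`-decomposable if there is `f : I → μ` such that
`f ⁻¹' H ∉ U` for every `H ⊆ μ` of cardinality `< μ`. -/
def MuDecomposable {I : Type} (U : Ultrafilter I) (μ : Cardinal.{0}) : Prop :=
  ∃ f : I → μ.out, ∀ H : Set μ.out, #H < μ → f ⁻¹' H ∉ U

/-- In the canonical well-ordered type of cardinality `c`, initial segments have
cardinality `< c`. -/
private lemma mk_Iio_lt (c : Cardinal.{0}) (b : c.ord.ToType) : #(Set.Iio b) < c := by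
  letI : IsWellOrder c.ord.ToType (· < ·) := isWellOrder_lt
  have h2 := Ordinal.typein_lt_self b
  have h1 : #(Set.Iio b) = (Ordinal.typein (α := c.ord.ToType) (· < ·) b).card := rfl
  rw [h1]
  exact Cardinal.lt_ord.mp h2

/-- In the canonical well-ordered type of a regular cardinal `c`, every set of
cardinality `< c` is strictly bounded. -/
private lemma bounded_lt {c : Cardinal.{0}} (hc : c.IsRegular) (s : Set c.ord.ToType)
    (hs : #s < c) : ∃ b : c.ord.ToType, ∀ x ∈ s, x < b := by
  letI : IsWellOrder c.ord.ToType (· < ·) := isWellOrder_lt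
  have h : #s < Order.cof c.ord.ToType := by
    rw [Ordinal.cof_toType, hc.cof_ord]; exact hs
  exact not_isCofinal_iff.mp (fun hcof => (Order.cof_le hcof).not_gt h)

/-- (Kunen–Prikry) If `λ` is a regular infinite cardinal and an ultrafilter `U` is
`λ⁺`-decomposable, then `U` is `λ`-decomposable. -/
theorem stmt3 {I : Type} (U : Ultrafilter I) (lam : Cardinal.{0}) (hreg : lam.IsRegular)
    (h : MuDecomposable U (Order.succ lam)) : MuDecomposable U lam := by
  by_contra hcon
  have hlam0 : ℵ₀ ≤ lam := hreg.aleph0_le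
  set κ := Order.succ lam with hκdef
  obtain ⟨f0, hf0⟩ := h
  have hlamκ : lam < κ := Order.lt_succ lam
  have hκ0 : ℵ₀ ≤ κ := hlam0.trans hlamκ.le
  have hK : #(κ.ord.ToType) = κ := by rw [Cardinal.mk_toType, Cardinal.card_ord]
  have hL : #(lam.ord.ToType) = lam := by rw [Cardinal.mk_toType, Cardinal.card_ord]
  have hLne : Nonempty lam.ord.ToType := by
    rw [← Cardinal.mk_ne_zero_iff, hL]
    exact (aleph0_pos.trans_le hlam0).ne'
  obtain ⟨ψ⟩ : Nonempty (κ.out ≃ κ.ord.ToType) := Cardinal.eq.mp (by rw [mk_out, hK])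
  obtain ⟨φ⟩ : Nonempty (lam.ord.ToType ≃ lam.out) := Cardinal.eq.mp (by rw [mk_out, hL])
  set F : I → κ.ord.ToType := fun i => ψ (f0 i) with hF
  -- the transferred decomposability hypothesis
  have hf : ∀ S : Set κ.ord.ToType, #S < κ → F ⁻¹' S ∉ U := by
    intro S hS
    have hEq : F ⁻¹' S = f0 ⁻¹' (ψ ⁻¹' S) := rfl
    rw [hEq]
    apply hf0
    exact lt_of_le_of_lt (Cardinal.mk_preimage_of_injective _ _ ψ.injective) hS
  -- (1) the pushforward of `U` along `F` is "uniform"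
  have hgt : ∀ b : κ.ord.ToType, {i | b < F i} ∈ U := by
    intro b
    have hsub : Set.Iic b ⊆ Set.Iio b ∪ {b} := by
      intro x hx
      rcases lt_or_eq_of_le (Set.mem_Iic.mp hx) with h' | h'
      · exact Or.inl h'
      · exact Or.inr (by simp [h'])
    have hIic : #(Set.Iic b) < κ := by
      calc #(Set.Iic b) ≤ #(↥(Set.Iio b ∪ {b})) := Cardinal.mk_le_mk_of_subset hsub
        _ ≤ #(Set.Iio b) + #({b} : Set _) := Cardinal.mk_union_le _ _
        _ < κ := by
            rw [Cardinal.mk_singleton]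
            exact Cardinal.add_lt_of_lt hκ0 (mk_Iio_lt κ b) (one_lt_aleph0.trans_le hκ0)
    have h1 := hf (Set.Iic b) hIic
    have hEq : {i | b < F i} = (F ⁻¹' Set.Iic b)ᶜ := by
      ext i; simp [not_le]
    rw [hEq]
    exact Ultrafilter.compl_mem_iff_notMem.mpr h1
  -- (2) every function into `lam` is bounded mod `U` (negation of λ-decomposability)
  have hnd : ∀ g : I → lam.ord.ToType, ∃ γ, {i | g i < γ} ∈ U := by
    intro g
    have h2 : ∃ H : Set lam.out, #H < lam ∧ (φ ∘ g) ⁻¹' H ∈ U := by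
      by_contra h3
      push_neg at h3
      exact hcon ⟨φ ∘ g, fun H hH => h3 H hH⟩
    obtain ⟨H, hH1, hH2⟩ := h2
    have hS : #(φ ⁻¹' H) < lam :=
      lt_of_le_of_lt (Cardinal.mk_preimage_of_injective _ _ φ.injective) hH1
    obtain ⟨γ, hγ⟩ := bounded_lt hreg _ hS
    refine ⟨γ, Filter.mem_of_superset hH2 ?_⟩
    intro i hi
    exact hγ (g i) hi
  -- (3) embeddings of initial segments of `κ` into `lam`
  have hle : ∀ i : I, #(Set.Iio (F i)) ≤ #(lam.ord.ToType) := by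
    intro i
    rw [hL]
    exact Order.lt_succ_iff.mp (mk_Iio_lt κ (F i))
  have hembE : ∀ i : I, Nonempty (↥(Set.Iio (F i)) ↪ lam.ord.ToType) :=
    fun i => (Cardinal.le_def _ _).mp (hle i)
  let emb : ∀ i : I, ↥(Set.Iio (F i)) ↪ lam.ord.ToType := fun i => (hembE i).some
  let j : I → κ.ord.ToType → lam.ord.ToType := fun i b =>
    if hb : b < F i then emb i ⟨b, hb⟩ else Classical.arbitrary _
  have hjval : ∀ (i : I) (b : κ.ord.ToType) (hb : b < F i), j i b = emb i ⟨b, hb⟩ := by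
    intro i b hb
    exact dif_pos hb
  -- (4) bounds for the "inverse" functions
  choose γfun hγ using fun b => hnd (fun i => j i b)
  have hX : ∀ b : κ.ord.ToType, {i | b < F i ∧ j i b < γfun b} ∈ U := by
    intro b
    have hEq : {i | b < F i ∧ j i b < γfun b} = {i | b < F i} ∩ {i | j i b < γfun b} := by
      ext i; simp [Set.mem_setOf_eq, Set.mem_inter_iff]
    rw [hEq]
    exact Filter.inter_mem (hgt b) (hγ b)
  -- (5) pigeonhole: some bound `γ0` occurs for `λ`-many `b`'s
  have hpig : ∃ γ0, lam ≤ #{b : κ.ord.ToType // γfun b = γ0} := by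
    by_contra h5
    push_neg at h5
    have hle2 : κ ≤ lam := by
      calc κ = #(κ.ord.ToType) := hK.symm
        _ = #(Σ γ0 : lam.ord.ToType, {b // γfun b = γ0}) :=
            (Cardinal.mk_congr (Equiv.sigmaFiberEquiv γfun)).symm
        _ = Cardinal.sum (fun γ0 => #{b // γfun b = γ0}) := Cardinal.mk_sigma _
        _ ≤ Cardinal.sum (fun _ : lam.ord.ToType => lam) :=
            Cardinal.sum_le_sum _ _ (fun γ0 => (h5 γ0).le)
        _ = #(lam.ord.ToType) * lam := Cardinal.sum_const' _ _
        _ = lam * lam := by rw [hL]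
        _ = lam := Cardinal.mul_eq_self hlam0
    exact absurd hle2 (not_le.mpr hlamκ)
  obtain ⟨γ0, hγ0⟩ := hpig
  obtain ⟨e2⟩ : Nonempty (lam.ord.ToType ↪ {b : κ.ord.ToType // γfun b = γ0}) :=
    (Cardinal.le_def _ _).mp (by rw [hL]; exact hγ0)
  let bfun : lam.ord.ToType → κ.ord.ToType := fun ν => (e2 ν).1
  have hbinj : Function.Injective bfun := fun ν ν' hh => e2.injective (Subtype.ext hh)
  have hbγ : ∀ ν, γfun (bfun ν) = γ0 := fun ν => (e2 ν).2
  -- (6) the diagonal counting function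
  let T : I → Set lam.ord.ToType := fun i => {ν | bfun ν < F i ∧ j i (bfun ν) < γ0}
  have hT : ∀ i, #(T i) < lam := by
    intro i
    have hinj : #(T i) ≤ #(Set.Iio γ0) := by
      refine Cardinal.mk_le_of_injective
        (f := fun x : T i => (⟨j i (bfun x.1), x.2.2⟩ : Set.Iio γ0)) ?_
      rintro ⟨ν, hν1, hν2⟩ ⟨ν', hν'1, hν'2⟩ hh
      simp only [Subtype.mk_eq_mk] at hh ⊢
      replace hh : j i (bfun ν) = j i (bfun ν') := congrArg Subtype.val hh
      rw [hjval i _ hν1, hjval i _ hν'1] at hh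
      have h6 := (emb i).injective hh
      have h7 : bfun ν = bfun ν' := Subtype.mk_eq_mk.mp h6
      exact hbinj h7
    exact lt_of_le_of_lt hinj (mk_Iio_lt lam γ0)
  have hkex : ∀ i, ∃ b, ∀ ν ∈ T i, ν < b := fun i => bounded_lt hreg _ (hT i)
  choose k hk using hkex
  -- (7) the contradiction
  obtain ⟨γ', hγ'⟩ := hnd k
  have hmem : ({i | bfun γ' < F i ∧ j i (bfun γ') < γfun (bfun γ')} ∩ {i | k i < γ'} : Set I)
      ∈ (U : Filter I) := Filter.inter_mem (hX (bfun γ')) hγ'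
  obtain ⟨i, hi1, hi2⟩ := Filter.nonempty_of_mem hmem
  have hTi : γ' ∈ T i := ⟨hi1.1, by rw [← hbγ γ']; exact hi1.2⟩
  exact lt_asymm (hk i γ' hTi) hi2
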